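/- With the right H-action on V^{⊗d} above, for μ ∈ Z^d weakly decreasing with entries in {1,...,p}, and w a minimal-length representative of W_e·w (where W_e is the stabilizer of μ in the symmetric group S_d), one has u_μ ⋄ t_w = u_{μ·w}. -/

import Mathlib

/-!
Statement 10: With the right Hecke-algebra action on `V^{⊗d}` (operators `Ti`),
for `μ ∈ ℤ^d` weakly decreasing with entries in `{1,…,p}` and `w` a minimal-length
representative of `W_e·w` (`W_e` the stabilizer of `μ` in `S_d`, acting by place
permutation `(μ·w)_i = μ_{w(i)}`), one has `u_μ ⋄ t_w = u_{μ·w}`, where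
`t_w = t_{i₁}⋯t_{i_k}` along a reduced expression `w = s_{i₁}⋯s_{i_k}`.
-/

open LaurentPolynomial

noncomputable section

abbrev QA := LaurentPolynomial ℤ

abbrev Tensor (d : ℕ) := (Fin d → ℤ) →₀ QA

/-- The operator of `t_i`. -/
def Ti (d : ℕ) (i j : Fin d) : Tensor d →ₗ[QA] Tensor d :=
  Finsupp.lsum QA fun γ =>
    if γ i = γ j then (T 1 : QA) • Finsupp.lsingle γ
    else if γ j < γ i then Finsupp.lsingle (γ ∘ Equiv.swap i j)
    else Finsupp.lsingle (γ ∘ Equiv.swap i j) +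
      (T 1 - T (-1) : QA) • Finsupp.lsingle γ

/-- The adjacent transposition `s_i = (i, i+1)`. -/
def swapA (d : ℕ) (i : {i : ℕ // i + 1 < d}) : Equiv.Perm (Fin d) :=
  Equiv.swap ⟨i.1, by omega⟩ ⟨i.1 + 1, i.2⟩

/-- Product of a word in the adjacent transpositions. -/
def wordProd (d : ℕ) (L : List {i : ℕ // i + 1 < d}) : Equiv.Perm (Fin d) :=
  (L.map (swapA d)).prod

/-- Coxeter length on `S_d`: minimal length of a word in adjacent transpositions. -/
noncomputable def len (d : ℕ) (w : Equiv.Perm (Fin d)) : ℕ :=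
  sInf {k | ∃ L : List {i : ℕ // i + 1 < d}, wordProd d L = w ∧ L.length = k}

/-- The operator of `t_{s_i}`. -/
def TiOp (d : ℕ) (i : {i : ℕ // i + 1 < d}) : Tensor d →ₗ[QA] Tensor d :=
  Ti d ⟨i.1, by omega⟩ ⟨i.1 + 1, i.2⟩

namespace Stmt10

variable {d : ℕ}

/-- The left index of the adjacent transposition. -/
def idxA (d : ℕ) (a : {i : ℕ // i + 1 < d}) : Fin d := ⟨a.1, by omega⟩

/-- The right index of the adjacent transposition. -/
def idxB (d : ℕ) (a : {i : ℕ // i + 1 < d}) : Fin d := ⟨a.1 + 1, a.2⟩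

@[simp] lemma idxA_val (a : {i : ℕ // i + 1 < d}) : (idxA d a).val = a.1 := rfl
@[simp] lemma idxB_val (a : {i : ℕ // i + 1 < d}) : (idxB d a).val = a.1 + 1 := rfl

lemma swapA_eq (a : {i : ℕ // i + 1 < d}) :
    swapA d a = Equiv.swap (idxA d a) (idxB d a) := rfl

lemma idxA_lt_idxB (a : {i : ℕ // i + 1 < d}) : idxA d a < idxB d a := by
  simp [Fin.lt_def]

lemma idxA_ne_idxB (a : {i : ℕ // i + 1 < d}) : idxA d a ≠ idxB d a :=
  (idxA_lt_idxB a).ne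

lemma swapA_mul_self (a : {i : ℕ // i + 1 < d}) : swapA d a * swapA d a = 1 :=
  Equiv.swap_mul_self _ _

lemma wordProd_nil : wordProd d [] = 1 := rfl

lemma wordProd_cons (a : {i : ℕ // i + 1 < d}) (L : List {i : ℕ // i + 1 < d}) :
    wordProd d (a :: L) = swapA d a * wordProd d L := by
  simp [wordProd]

lemma wordProd_append (L₁ L₂ : List {i : ℕ // i + 1 < d}) :
    wordProd d (L₁ ++ L₂) = wordProd d L₁ * wordProd d L₂ := by
  simp [wordProd]

/-- The inversion set of a permutation. -/
def invSet (d : ℕ) (v : Equiv.Perm (Fin d)) : Finset (Fin d × Fin d) :=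
  Finset.univ.filter fun p => p.1 < p.2 ∧ v p.2 < v p.1

/-- The number of inversions. -/
def invn (d : ℕ) (v : Equiv.Perm (Fin d)) : ℕ := (invSet d v).card

lemma mem_invSet {v : Equiv.Perm (Fin d)} {p : Fin d × Fin d} :
    p ∈ invSet d v ↔ p.1 < p.2 ∧ v p.2 < v p.1 := by
  simp [invSet]

lemma invn_one : invn d 1 = 0 := by
  rw [invn, Finset.card_eq_zero]
  ext p
  rw [mem_invSet]
  simp only [Finset.notMem_empty, iff_false]
  rintro ⟨h1, h2⟩
  rw [Equiv.Perm.one_apply, Equiv.Perm.one_apply] at h2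
  exact h1.asymm h2

/-- An adjacent swap moves all pairs other than `(i, i+1)` monotonically. -/
lemma swapA_lt (a : {i : ℕ // i + 1 < d}) {x y : Fin d} (hxy : x < y)
    (hne : ¬(x = idxA d a ∧ y = idxB d a)) : swapA d a x < swapA d a y := by
  rw [swapA_eq]
  simp only [Equiv.swap_apply_def]
  have hx := x.2; have hy := y.2
  rw [Fin.lt_def] at hxy
  split_ifs <;>
    · simp only [Fin.lt_def, Fin.ext_iff, idxA_val, idxB_val, not_and] at *
      omega

lemma invn_mul_swapA (a : {i : ℕ // i + 1 < d}) (v : Equiv.Perm (Fin d))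
    (h : v (idxA d a) < v (idxB d a)) :
    invn d (v * swapA d a) = invn d v + 1 := by
  classical
  set i := idxA d a with hi
  set j := idxB d a with hj
  set s := swapA d a with hsdef
  have hss : ∀ x, s (s x) = x := fun x => by
    rw [hsdef, swapA_eq]; exact Equiv.swap_apply_self _ _ _
  have hsi : s i = j := by rw [hsdef, swapA_eq]; exact Equiv.swap_apply_left _ _
  have hsj : s j = i := by rw [hsdef, swapA_eq]; exact Equiv.swap_apply_right _ _
  have hij : i < j := idxA_lt_idxB a
  -- membership transfer for all pairs other than (i,j)
  have mem_aux : ∀ u : Equiv.Perm (Fin d), ∀ p : Fin d × Fin d,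
      p ∈ (invSet d (u * s)).erase (i, j) →
      (s p.1, s p.2) ∈ (invSet d u).erase (i, j) := by
    intro u p hp
    rw [Finset.mem_erase, mem_invSet] at hp
    obtain ⟨hpne, h1, h2⟩ := hp
    rw [Finset.mem_erase, mem_invSet]
    refine ⟨?_, ?_, ?_⟩
    · intro hc
      have hc1 : s p.1 = i := congrArg Prod.fst hc
      have hc2 : s p.2 = j := congrArg Prod.snd hc
      have e1 : p.1 = j := by rw [← hsi, ← hc1, hss]
      have e2 : p.2 = i := by rw [← hsj, ← hc2, hss]
      rw [e1, e2] at h1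
      exact absurd h1 hij.asymm
    · refine swapA_lt a h1 ?_
      intro hc
      exact hpne (Prod.ext hc.1 hc.2)
    · simpa [Equiv.Perm.mul_apply] using h2
  have key : ((invSet d (v * s)).erase (i, j)).card = ((invSet d v).erase (i, j)).card := by
    apply Finset.card_nbij' (fun p => (s p.1, s p.2)) (fun p => (s p.1, s p.2))
    · exact mem_aux v
    · intro p hp
      have hv' : invSet d ((v * s) * s) = invSet d v := by
        rw [mul_assoc, hsdef, swapA_mul_self, mul_one]
      have := mem_aux (v * s) p (by rwa [hv'])
      exact this
    · intro p _; simp [hss]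
    · intro p _; simp [hss]
  have hmem1 : (i, j) ∈ invSet d (v * s) := by
    rw [mem_invSet]
    refine ⟨hij, ?_⟩
    simp only [Equiv.Perm.mul_apply, hsi, hsj]
    exact h
  have hmem2 : (i, j) ∉ invSet d v := by
    rw [mem_invSet]
    intro hc
    exact absurd h hc.2.asymm
  have e1 : ((invSet d (v * s)).erase (i, j)).card + 1 = (invSet d (v * s)).card :=
    Finset.card_erase_add_one hmem1
  have e2 : (invSet d v).erase (i, j) = invSet d v := Finset.erase_eq_of_notMem hmem2
  rw [invn, invn, ← e1, key, e2]

lemma invn_mul_swapA' (a : {i : ℕ // i + 1 < d}) (v : Equiv.Perm (Fin d))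
    (h : v (idxB d a) < v (idxA d a)) :
    invn d (v * swapA d a) + 1 = invn d v := by
  have h2 := invn_mul_swapA a (v * swapA d a) (by
    simp only [Equiv.Perm.mul_apply, swapA_eq, Equiv.swap_apply_left, Equiv.swap_apply_right]
    exact h)
  rw [mul_assoc, swapA_mul_self, mul_one] at h2
  omega

lemma eq_one_of_strictMono (v : Equiv.Perm (Fin d)) (h : StrictMono v) : v = 1 := by
  have hsurj : Function.Surjective v := v.surjective
  have huniq : StrictMono.orderIsoOfSurjective (⇑v) h hsurj = OrderIso.refl (Fin d) :=
    Subsingleton.elim _ _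
  ext x
  have h1 : v x = (StrictMono.orderIsoOfSurjective (⇑v) h hsurj) x :=
    (congrFun (StrictMono.coe_orderIsoOfSurjective (⇑v) h hsurj) x).symm
  rw [h1, huniq]
  rfl

lemma eq_one_of_invn_eq_zero (v : Equiv.Perm (Fin d)) (h : invn d v = 0) : v = 1 := by
  apply eq_one_of_strictMono
  intro x y hxy
  rw [invn, Finset.card_eq_zero] at h
  have : (x, y) ∉ invSet d v := by rw [h]; exact Finset.notMem_empty _
  rw [mem_invSet] at this
  push_neg at this
  have hle := this hxy
  have hne : v x ≠ v y := fun hc => hxy.ne (v.injective hc)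
  exact lt_of_le_of_ne hle hne

lemma exists_descent (v : Equiv.Perm (Fin d)) (hv : v ≠ 1) :
    ∃ a : {i : ℕ // i + 1 < d}, v (idxB d a) < v (idxA d a) := by
  by_contra hc
  push_neg at hc
  apply hv
  apply eq_one_of_strictMono
  rcases Nat.eq_zero_or_pos d with hd | hd
  · intro x; subst hd; exact absurd x.2 (by omega)
  obtain ⟨m, rfl⟩ : ∃ m, d = m + 1 := ⟨d - 1, by omega⟩
  rw [Fin.strictMono_iff_lt_succ]
  intro i
  have hi : (i : ℕ) + 1 < m + 1 := by omega
  have := hc ⟨i, hi⟩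
  have hne : v (idxA (m+1) ⟨i, hi⟩) ≠ v (idxB (m+1) ⟨i, hi⟩) :=
    fun hc2 => idxA_ne_idxB _ (v.injective hc2)
  have hlt : v (idxA (m+1) ⟨i, hi⟩) < v (idxB (m+1) ⟨i, hi⟩) :=
    lt_of_le_of_ne this hne
  have e1 : idxA (m+1) ⟨i, hi⟩ = Fin.castSucc i := by ext; simp
  have e2 : idxB (m+1) ⟨i, hi⟩ = i.succ := by ext; simp
  rwa [e1, e2] at hlt

lemma exists_word : ∀ (n : ℕ) (v : Equiv.Perm (Fin d)), invn d v = n →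
    ∃ L : List {i : ℕ // i + 1 < d}, wordProd d L = v ∧ L.length = n := by
  intro n
  induction n with
  | zero =>
    intro v hv
    exact ⟨[], by rw [wordProd_nil, eq_one_of_invn_eq_zero v hv], rfl⟩
  | succ n ih =>
    intro v hv
    have hv1 : v ≠ 1 := fun hc => by rw [hc, invn_one] at hv; omega
    obtain ⟨a, ha⟩ := exists_descent v hv1
    have hstep := invn_mul_swapA' a v ha
    obtain ⟨L, hL, hlen⟩ := ih (v * swapA d a) (by omega)
    refine ⟨L ++ [a], ?_, by simp [hlen]⟩
    rw [wordProd_append, hL]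
    have : wordProd d [a] = swapA d a := by simp [wordProd]
    rw [this, mul_assoc, swapA_mul_self, mul_one]

lemma len_le (v : Equiv.Perm (Fin d)) (L : List {i : ℕ // i + 1 < d})
    (h : wordProd d L = v) : len d v ≤ L.length :=
  Nat.sInf_le ⟨L, h, rfl⟩

lemma len_spec (v : Equiv.Perm (Fin d)) :
    ∃ L : List {i : ℕ // i + 1 < d}, wordProd d L = v ∧ L.length = len d v := by
  have hne : {k | ∃ L : List {i : ℕ // i + 1 < d}, wordProd d L = v ∧ L.length = k}.Nonempty := by
    obtain ⟨L, hL, hlen⟩ := exists_word (invn d v) v rfl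
    exact ⟨L.length, L, hL, rfl⟩
  exact Nat.sInf_mem hne

lemma invn_wordProd_le (L : List {i : ℕ // i + 1 < d}) :
    invn d (wordProd d L) ≤ L.length := by
  induction L using List.reverseRecOn with
  | nil => rw [wordProd_nil, invn_one]; exact Nat.zero_le _
  | append_singleton L a ih =>
    rw [wordProd_append]
    have : wordProd d [a] = swapA d a := by simp [wordProd]
    rw [this]
    set v := wordProd d L
    have hne : v (idxA d a) ≠ v (idxB d a) :=
      fun hc => idxA_ne_idxB a (v.injective hc)
    rcases lt_or_gt_of_ne hne with h | h
    · have := invn_mul_swapA a v h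
      simp only [List.length_append, List.length_singleton]
      omega
    · have := invn_mul_swapA' a v h
      simp only [List.length_append, List.length_singleton]
      omega

lemma len_eq_invn (v : Equiv.Perm (Fin d)) : len d v = invn d v := by
  apply le_antisymm
  · obtain ⟨L, hL, hlen⟩ := exists_word (invn d v) v rfl
    calc len d v ≤ L.length := len_le v L hL
      _ = invn d v := hlen
  · obtain ⟨L, hL, hlen⟩ := len_spec v
    calc invn d v = invn d (wordProd d L) := by rw [hL]
      _ ≤ L.length := invn_wordProd_le L
      _ = len d v := hlen

lemma len_one : len d 1 = 0 :=
  Nat.le_zero.mp (len_le 1 [] wordProd_nil)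

lemma len_mul_word_le (v : Equiv.Perm (Fin d)) (L : List {i : ℕ // i + 1 < d}) :
    len d (v * wordProd d L) ≤ len d v + L.length := by
  obtain ⟨Lv, hLv, hlen⟩ := len_spec v
  have : wordProd d (Lv ++ L) = v * wordProd d L := by rw [wordProd_append, hLv]
  calc len d (v * wordProd d L) ≤ (Lv ++ L).length := len_le _ _ this
    _ = len d v + L.length := by rw [List.length_append, hlen]

lemma Ti_single_swap (i j : Fin d) (γ : Fin d → ℤ) (h : γ j < γ i) :
    Ti d i j (Finsupp.single γ 1) = Finsupp.single (γ ∘ Equiv.swap i j) 1 := by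
  rw [Ti, Finsupp.lsum_single, if_neg h.ne', if_pos h, Finsupp.lsingle_apply]

/-- The key induction: peeling off letters of a reduced word of a minimal coset
representative, the generators act on the standard basis by place permutation. -/
lemma main_fold (μ : Fin d → ℤ) (hmono : ∀ i j : Fin d, i ≤ j → μ j ≤ μ i)
    (w : Equiv.Perm (Fin d))
    (hmin : ∀ u : Equiv.Perm (Fin d), μ ∘ u = μ → len d w ≤ len d (u * w)) :
    ∀ (L : List {i : ℕ // i + 1 < d}) (v : Equiv.Perm (Fin d)),
      v * wordProd d L = w → len d w = len d v + L.length →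
      L.foldl (fun x i => TiOp d i x) (Finsupp.single (μ ∘ v) (1 : QA)) =
        Finsupp.single (μ ∘ w) (1 : QA) := by
  intro L
  induction L with
  | nil =>
    intro v hv _
    rw [wordProd_nil, mul_one] at hv
    subst hv
    rfl
  | cons a L ih =>
    intro v hv hlen
    rw [wordProd_cons, ← mul_assoc] at hv
    rw [List.length_cons] at hlen
    set i := idxA d a with hidef
    set j := idxB d a with hjdef
    -- μ takes distinct values at v i, v j
    have hne : μ (v i) ≠ μ (v j) := by
      intro heq
      have hu : μ ∘ (v * swapA d a * v⁻¹) = μ := by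
        funext x
        simp only [Function.comp_apply, Equiv.Perm.mul_apply]
        rcases eq_or_ne (v⁻¹ x) i with h1 | h1
        · rw [swapA_eq, h1]
          rw [show Equiv.swap (idxA d a) (idxB d a) (idxA d a) = idxB d a from
            Equiv.swap_apply_left _ _]
          rw [← hjdef, ← heq, ← h1, ← Equiv.Perm.mul_apply, mul_inv_cancel, Equiv.Perm.one_apply]
        rcases eq_or_ne (v⁻¹ x) j with h2 | h2
        · rw [swapA_eq, h2]
          rw [show Equiv.swap (idxA d a) (idxB d a) (idxB d a) = idxA d a from
            Equiv.swap_apply_right _ _]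
          rw [← hidef, heq, ← h2, ← Equiv.Perm.mul_apply, mul_inv_cancel, Equiv.Perm.one_apply]
        · rw [swapA_eq, Equiv.swap_apply_of_ne_of_ne h1 h2, ← Equiv.Perm.mul_apply, mul_inv_cancel, Equiv.Perm.one_apply]
      have hmin' := hmin _ hu
      have hw2 : (v * swapA d a * v⁻¹) * w = v * wordProd d L := by
        rw [← hv]
        calc (v * swapA d a * v⁻¹) * ((v * swapA d a) * wordProd d L)
            = v * (swapA d a * swapA d a) * wordProd d L := by group
          _ = v * wordProd d L := by rw [swapA_mul_self, mul_one]
      rw [hw2] at hmin'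
      have hle := len_mul_word_le v L
      omega
    -- v i < v j, otherwise the word would not be reduced
    have hlt : v i < v j := by
      rcases lt_trichotomy (v i) (v j) with h | h | h
      · exact h
      · exact absurd (v.injective h) (idxA_ne_idxB a)
      · exfalso
        have hB := invn_mul_swapA' a v h
        have h1 : len d w ≤ len d (v * swapA d a) + L.length := by
          rw [← hv]; exact len_mul_word_le _ _
        simp only [len_eq_invn] at h1 hlen
        omega
    have hμlt : μ (v j) < μ (v i) :=
      lt_of_le_of_ne (hmono _ _ hlt.le) (fun hc => hne hc.symm)
    -- the action of the generator
    have hstep : TiOp d a (Finsupp.single (μ ∘ v) (1 : QA)) =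
        Finsupp.single (μ ∘ (v * swapA d a)) (1 : QA) := by
      have h2 : ((μ ∘ v) : Fin d → ℤ) j < (μ ∘ v) i := hμlt
      have := Ti_single_swap i j (μ ∘ v) h2
      have hTi : TiOp d a = Ti d i j := rfl
      rw [hTi, this]
      rfl
    -- recursion
    have hA : invn d (v * swapA d a) = invn d v + 1 := invn_mul_swapA a v hlt
    have hlen' : len d w = len d (v * swapA d a) + L.length := by
      simp only [len_eq_invn] at hlen ⊢
      omega
    rw [List.foldl_cons, hstep]
    exact ih (v * swapA d a) hv hlen'

end Stmt10

theorem stmt10 (d p : ℕ) (μ : Fin d → ℤ)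
    -- `μ` weakly decreasing with entries in `{1,…,p}`
    (hmono : ∀ i j : Fin d, i ≤ j → μ j ≤ μ i)
    (hrange : ∀ i, 1 ≤ μ i ∧ μ i ≤ (p : ℤ))
    (w : Equiv.Perm (Fin d)) (L : List {i : ℕ // i + 1 < d})
    -- `L` is a reduced expression for `w`
    (hL : wordProd d L = w) (hred : L.length = len d w)
    -- `w` has minimal length in its coset `W_e w`, `W_e = Stab(μ)`
    (hmin : ∀ u : Equiv.Perm (Fin d), μ ∘ u = μ → len d w ≤ len d (u * w)) :
    L.foldl (fun v i => TiOp d i v) (Finsupp.single μ (1 : QA)) =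
      Finsupp.single (μ ∘ w) (1 : QA) := by
  have hmain := Stmt10.main_fold μ hmono w hmin L 1 (by rw [one_mul, hL])
    (by rw [Stmt10.len_one, hred, Nat.zero_add])
  have hμ1 : μ ∘ ((1 : Equiv.Perm (Fin d)) : Fin d → Fin d) = μ := by
    funext x; rfl
  rwa [hμ1] at hmain

end
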